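/- In the confounded model class M_cf (S = f_S(U_S), D = f_D(S,U,U_D), A = f_A(S,D,U,U_A) with independent exogenous variables), the graphical fairness notion (S not a parent of A, i.e., f_A(s,d,U,U_A) constant in s a.s. for all d) is equivalent to the counterfactual fairness notion (for all s,d: f_A(s,d,U,U_A) = f_A(S,d,U,U_A) a.s.), and both strictly imply the interventional notion (for all s,d: P(f_A(s,d,U,U_A)=1) = P(f_A(S,d,U,U_A)=1)). -/

import Mathlib

open MeasureTheory ProbabilityTheory
open scoped ENNReal

private lemma aux_one_of_compl {Ω} [MeasurableSpace Ω] (μ : Measure Ω)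
    [IsProbabilityMeasure μ] {t : Set Ω} (h : μ tᶜ = 0) : μ t = 1 := by
  refine le_antisymm prob_le_one ?_
  calc (1:ℝ≥0∞) = μ Set.univ := (measure_univ).symm
    _ ≤ μ t + μ tᶜ := by
        rw [← Set.union_compl_self t] at *; exact measure_union_le _ _
    _ = μ t := by rw [h, add_zero]

private lemma aux_cnt2 (x y : Bool × Bool) (h : x ≠ y) :
    Measure.count ({x, y} : Set (Bool × Bool)) = 2 := by
  rw [Measure.count_apply_finite _ (Set.toFinite _)]
  simp [h]

/-- In the confounded model class `M_cf` (`A = f_A(S,D,U,U_A)` with latent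
confounder `U`), the graphical fairness notion is equivalent to the
counterfactual one, both imply the interventional notion, and the implication
is strict: there is an interventionally fair model that is not
counterfactually fair. -/
theorem stmt14 :
    (∀ (Ω 𝓓 𝓤 𝓤A : Type) (_ : MeasurableSpace Ω)
       (μ : Measure Ω) (_ : IsProbabilityMeasure μ)
       (S : Ω → Bool) (U : Ω → 𝓤) (UA : Ω → 𝓤A)
       (fA : Bool → 𝓓 → 𝓤 → 𝓤A → Bool),
       Measurable S →
       (∀ (s : Bool) (d : 𝓓), Measurable (fun ω => fA s d (U ω) (UA ω))) →
       (((∀ (d : 𝓓) (s s' : Bool),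
            μ {ω | fA s d (U ω) (UA ω) = fA s' d (U ω) (UA ω)} = 1) ↔
          (∀ (d : 𝓓) (s : Bool),
            μ {ω | fA s d (U ω) (UA ω) = fA (S ω) d (U ω) (UA ω)} = 1))
        ∧ ((∀ (d : 𝓓) (s : Bool),
            μ {ω | fA s d (U ω) (UA ω) = fA (S ω) d (U ω) (UA ω)} = 1) →
           (∀ (d : 𝓓) (s : Bool),
            μ {ω | fA s d (U ω) (UA ω) = true}
              = μ {ω | fA (S ω) d (U ω) (UA ω) = true}))))
    ∧ (∃ (Ω : Type) (_ : MeasurableSpace Ω)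
        (μ : Measure Ω) (_ : IsProbabilityMeasure μ)
        (S : Ω → Bool) (U : Ω → Bool) (UA : Ω → Bool)
        (fA : Bool → Bool → Bool → Bool → Bool),
        (∀ (d s : Bool),
          μ {ω | fA s d (U ω) (UA ω) = true}
            = μ {ω | fA (S ω) d (U ω) (UA ω) = true}) ∧
        ¬ (∀ (d s : Bool),
          μ {ω | fA s d (U ω) (UA ω) = fA (S ω) d (U ω) (UA ω)} = 1)) := by
  constructor
  · intro Ω 𝓓 𝓤 𝓤A _ μ _ S U UA fA hS hf
    -- measurability of the counterfactual comparison function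
    have hfS : ∀ d : 𝓓, Measurable (fun ω => fA (S ω) d (U ω) (UA ω)) := by
      intro d
      have : (fun ω => fA (S ω) d (U ω) (UA ω))
          = fun ω => if S ω = true then fA true d (U ω) (UA ω)
                     else fA false d (U ω) (UA ω) := by
        funext ω; cases h : S ω <;> simp
      rw [this]
      exact Measurable.ite (hS (measurableSet_singleton true)) (hf true d) (hf false d)
    -- null complements of graphical equality sets
    have nullG : ∀ (d : 𝓓) (s s' : Bool),
        (∀ (d : 𝓓) (s s' : Bool),
          μ {ω | fA s d (U ω) (UA ω) = fA s' d (U ω) (UA ω)} = 1) →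
        μ {ω | fA s d (U ω) (UA ω) = fA s' d (U ω) (UA ω)}ᶜ = 0 := fun d s s' hG =>
      (prob_compl_eq_zero_iff (measurableSet_eq_fun (hf s d) (hf s' d))).mpr (hG d s s')
    have nullC : ∀ (d : 𝓓) (s : Bool),
        (∀ (d : 𝓓) (s : Bool),
          μ {ω | fA s d (U ω) (UA ω) = fA (S ω) d (U ω) (UA ω)} = 1) →
        μ {ω | fA s d (U ω) (UA ω) = fA (S ω) d (U ω) (UA ω)}ᶜ = 0 := fun d s hC =>
      (prob_compl_eq_zero_iff (measurableSet_eq_fun (hf s d) (hfS d))).mpr (hC d s)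
    refine ⟨⟨?_, ?_⟩, ?_⟩
    · -- graphical → counterfactual
      intro hG d s
      refine aux_one_of_compl μ ?_
      have hsub : {ω | fA s d (U ω) (UA ω) = fA (S ω) d (U ω) (UA ω)}ᶜ ⊆
          {ω | fA s d (U ω) (UA ω) = fA true d (U ω) (UA ω)}ᶜ ∪
          {ω | fA s d (U ω) (UA ω) = fA false d (U ω) (UA ω)}ᶜ := by
        intro ω hω
        simp only [Set.mem_union, Set.mem_compl_iff, Set.mem_setOf_eq] at *
        cases h : S ω
        · right; rw [h] at hω; exact hω
        · left; rw [h] at hω; exact hω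
      refine le_antisymm ((measure_mono hsub).trans ((measure_union_le _ _).trans ?_))
        (zero_le)
      rw [nullG d s true hG, nullG d s false hG, add_zero]
    · -- counterfactual → graphical
      intro hC d s s'
      refine aux_one_of_compl μ ?_
      have hsub : {ω | fA s d (U ω) (UA ω) = fA s' d (U ω) (UA ω)}ᶜ ⊆
          {ω | fA s d (U ω) (UA ω) = fA (S ω) d (U ω) (UA ω)}ᶜ ∪
          {ω | fA s' d (U ω) (UA ω) = fA (S ω) d (U ω) (UA ω)}ᶜ := by
        intro ω hω
        simp only [Set.mem_union, Set.mem_compl_iff, Set.mem_setOf_eq] at *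
        by_contra h
        push_neg at h
        exact hω (h.1.trans h.2.symm)
      refine le_antisymm ((measure_mono hsub).trans ((measure_union_le _ _).trans ?_))
        (zero_le)
      rw [nullC d s hC, nullC d s' hC, add_zero]
    · -- counterfactual → interventional
      intro hC d s
      have hN := nullC d s hC
      refine measure_congr (MeasureTheory.ae_eq_set.mpr ⟨?_, ?_⟩)
      · refine measure_mono_null ?_ hN
        intro ω hω
        simp only [Set.mem_diff, Set.mem_compl_iff, Set.mem_setOf_eq] at *
        intro h; exact hω.2 (h ▸ hω.1)
      · refine measure_mono_null ?_ hN
        intro ω hω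
        simp only [Set.mem_diff, Set.mem_compl_iff, Set.mem_setOf_eq] at *
        intro h; exact hω.2 (h.trans hω.1)
  · -- strictness counterexample
    refine ⟨Bool × Bool, inferInstance, (4:ℝ≥0∞)⁻¹ • Measure.count, ?_, Prod.fst, fun _ => true,
      Prod.snd, fun s _ _ ua => xor s ua, ?_, ?_⟩
    · constructor
      have huniv : Measure.count (Set.univ : Set (Bool × Bool)) = 4 := by
        simp [Measure.count_apply_finite, Set.Finite.toFinset]
      rw [Measure.smul_apply, huniv, smul_eq_mul]
      exact ENNReal.inv_mul_cancel (by norm_num) (by norm_num)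
    · intro d s
      have h1 : {ω : Bool × Bool | xor s ω.2 = true} = {(true, !s), (false, !s)} := by
        ext ⟨a, b⟩; cases s <;> cases a <;> cases b <;> simp
      have h2 : {ω : Bool × Bool | xor ω.1 ω.2 = true}
          = {(true, false), (false, true)} := by
        ext ⟨a, b⟩; cases a <;> cases b <;> simp
      simp only []
      rw [h1, h2, Measure.smul_apply, Measure.smul_apply,
        aux_cnt2 (true, !s) (false, !s) (by simp),
        aux_cnt2 (true, false) (false, true) (by decide)]
    · intro h
      have h3 : {ω : Bool × Bool | xor true ω.2 = xor ω.1 ω.2}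
          = {(true, true), (true, false)} := by
        ext ⟨a, b⟩; cases a <;> cases b <;> simp
      have := h true true
      rw [h3, Measure.smul_apply, aux_cnt2 (true, true) (true, false) (by decide), smul_eq_mul] at this
      have h2 := congrArg (· * 4) this
      simp only [one_mul] at h2
      rw [mul_comm, ← mul_assoc, ENNReal.mul_inv_cancel (by norm_num) (by norm_num)] at h2
      norm_num at h2
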